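/- Let (N,M) be a marked Petri net, Q a nonempty set of P-components of N, and (N_Q, M_Q) the marked Q-projection. For every firing sequence σ executable in (N,M) leading to M', the projection of σ onto the transitions of N_Q is executable in (N_Q,M_Q) and leads to the marking M' restricted to the places of N_Q. -/

import Mathlib

open scoped Classical

/-- A Petri net over places `P` and transitions `T`, given by the pre-set and
post-set of each transition (encoding the flow relation `F`). -/
structure PetriNet (P T : Type) where
  pre : T → Set P
  post : T → Set P

namespace PetriNet

variable {P T : Type}

/-- Transition `t` is enabled at marking `M`. -/
def enabled (N : PetriNet P T) (M : P → ℕ) (t : T) : Prop :=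
  ∀ p ∈ N.pre t, 1 ≤ M p

/-- The marking obtained by firing `t` at `M`. -/
noncomputable def fire (N : PetriNet P T) (M : P → ℕ) (t : T) : P → ℕ :=
  fun p => M p - (if p ∈ N.pre t then 1 else 0) + (if p ∈ N.post t then 1 else 0)

/-- `Fires N M σ M'`: the firing sequence `σ` is executable at `M` and leads to `M'`. -/
inductive Fires (N : PetriNet P T) : (P → ℕ) → List T → (P → ℕ) → Prop
  | nil (M : P → ℕ) : Fires N M [] M
  | cons {M M'' : P → ℕ} {t : T} {σ : List T} :
      N.enabled M t → Fires N (N.fire M t) σ M'' → Fires N M (t :: σ) M''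

/-- `M'` is reachable from `M` in `N`. -/
def Reach (N : PetriNet P T) (M M' : P → ℕ) : Prop := ∃ σ, Fires N M σ M'

/-- The set of transitions enabled at `M`. -/
def enabledSet (N : PetriNet P T) (M : P → ℕ) : Set T := {t | N.enabled M t}

/-- `(N,M)` is lucent: distinct reachable markings enable distinct transition sets. -/
def Lucent (N : PetriNet P T) (M : P → ℕ) : Prop :=
  ∀ M1 M2, Reach N M M1 → Reach N M M2 →
    enabledSet N M1 = enabledSet N M2 → M1 = M2

/-- `(N,M)` is bounded. -/
def Bounded (N : PetriNet P T) (M : P → ℕ) : Prop :=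
  ∃ k, ∀ M', Reach N M M' → ∀ p, M' p ≤ k

/-- `(N,M)` is live. -/
def Live (N : PetriNet P T) (M : P → ℕ) : Prop :=
  ∀ M', Reach N M M' → ∀ t, ∃ M'', Reach N M' M'' ∧ N.enabled M'' t

/-- `MH` is a home marking of `(N,M)`. -/
def HomeMarking (N : PetriNet P T) (M MH : P → ℕ) : Prop :=
  ∀ M', Reach N M M' → Reach N M' MH

/-- A net is well-formed if some marking makes it live and bounded. -/
def WellFormed (N : PetriNet P T) : Prop := ∃ M, Live N M ∧ Bounded N M

/-- `N` is a free-choice net. -/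
def FreeChoice (N : PetriNet P T) : Prop :=
  ∀ t1 t2 : T, N.pre t1 = N.pre t2 ∨ N.pre t1 ∩ N.pre t2 = ∅

/-- A set of nodes is cluster-closed: with a place it contains all its output
transitions, and with a transition all its input places. -/
def ClusterClosed (N : PetriNet P T) (X : Set (P ⊕ T)) : Prop :=
  (∀ p, Sum.inl p ∈ X → ∀ t, p ∈ N.pre t → Sum.inr t ∈ X) ∧
  (∀ t, Sum.inr t ∈ X → ∀ p, p ∈ N.pre t → Sum.inl p ∈ X)

/-- The cluster of a node `x`: the smallest cluster-closed set containing `x`. -/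
def cluster (N : PetriNet P T) (x : P ⊕ T) : Set (P ⊕ T) :=
  ⋂₀ {X | x ∈ X ∧ ClusterClosed N X}

/-- The set of clusters of `N`. -/
def clusters (N : PetriNet P T) : Set (Set (P ⊕ T)) :=
  {C | ∃ x, C = cluster N x}

/-- `C` is a cluster of `N`. -/
def IsCluster (N : PetriNet P T) (C : Set (P ⊕ T)) : Prop := ∃ x, C = cluster N x

/-- The transitions of a set of nodes. -/
def transOf (C : Set (P ⊕ T)) : Set T := {t | Sum.inr t ∈ C}

/-- `M(C)`: one token on each place of `C`. -/
noncomputable def clusterMarking (C : Set (P ⊕ T)) : P → ℕ :=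
  fun p => if Sum.inl p ∈ C then 1 else 0

/-- `C` is a home cluster of `(N,M)`. -/
def HomeCluster (N : PetriNet P T) (M : P → ℕ) (C : Set (P ⊕ T)) : Prop :=
  IsCluster N C ∧ HomeMarking N M (clusterMarking C)

/-- `(N,M)` is perpetual: live, bounded, with a home cluster. -/
def Perpetual (N : PetriNet P T) (M : P → ℕ) : Prop :=
  Live N M ∧ Bounded N M ∧ ∃ C, HomeCluster N M C

/-- `•R`: transitions with an output place in `R`. -/
def preT (N : PetriNet P T) (R : Set P) : Set T := {t | ∃ p ∈ R, p ∈ N.post t}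

/-- `R•`: transitions with an input place in `R`. -/
def postT (N : PetriNet P T) (R : Set P) : Set T := {t | ∃ p ∈ R, p ∈ N.pre t}

/-- `R` is a siphon. -/
def Siphon (N : PetriNet P T) (R : Set P) : Prop := preT N R ⊆ postT N R

/-- `R` is a trap. -/
def Trap (N : PetriNet P T) (R : Set P) : Prop := postT N R ⊆ preT N R

/-- The arcs of `N` restricted to the node set `X`. -/
def subnetEdge (N : PetriNet P T) (X : Set (P ⊕ T)) : (P ⊕ T) → (P ⊕ T) → Prop :=
  fun a b => a ∈ X ∧ b ∈ X ∧
    ((∃ p t, a = Sum.inl p ∧ b = Sum.inr t ∧ p ∈ N.pre t) ∨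
     (∃ t p, a = Sum.inr t ∧ b = Sum.inl p ∧ p ∈ N.post t))

/-- `X` is (the node set of) a P-component of `N`: closed under neighbors of its
places, every transition has exactly one input and one output place inside it,
and its subnet is strongly connected. -/
def PComponent (N : PetriNet P T) (X : Set (P ⊕ T)) : Prop :=
  X.Nonempty ∧
  (∀ p, Sum.inl p ∈ X → ∀ t, (p ∈ N.pre t ∨ p ∈ N.post t) → Sum.inr t ∈ X) ∧
  (∀ t, Sum.inr t ∈ X →
    (∃! p, p ∈ N.pre t ∧ Sum.inl p ∈ X) ∧ (∃! p, p ∈ N.post t ∧ Sum.inl p ∈ X)) ∧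
  (∀ a ∈ X, ∀ b ∈ X, Relation.ReflTransGen (subnetEdge N X) a b)

/-- `N` has a P-cover. -/
def PCover (N : PetriNet P T) : Prop :=
  ∀ x : P ⊕ T, ∃ X, PComponent N X ∧ x ∈ X

/-- Total number of tokens of `M` on the places of `X`. -/
noncomputable def tokenCount [Fintype P] (X : Set (P ⊕ T)) (M : P → ℕ) : ℕ :=
  ∑ p : P, if Sum.inl p ∈ X then M p else 0

/-- `(N,M)` is locally safe: every P-component carries at most one token in
every reachable marking. -/
def LocallySafe [Fintype P] (N : PetriNet P T) (M : P → ℕ) : Prop :=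
  ∀ X, PComponent N X → ∀ M', Reach N M M' → tokenCount X M' ≤ 1

/-- The subnet of `N` generated by the node set `U`. -/
def restrict (N : PetriNet P T) (U : Set (P ⊕ T)) :
    PetriNet {p // Sum.inl p ∈ U} {t // Sum.inr t ∈ U} where
  pre t := {p | p.1 ∈ N.pre t.1}
  post t := {p | p.1 ∈ N.post t.1}

/-- Inclusion of the nodes of the subnet generated by `U` into the nodes of `N`. -/
def mapNode (U : Set (P ⊕ T)) :
    ({p // Sum.inl p ∈ U} ⊕ {t // Sum.inr t ∈ U}) → (P ⊕ T)
  | .inl p => .inl p.1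
  | .inr t => .inr t.1

/-- The flow relation of `N` as an edge relation on nodes. -/
def flowEdge (N : PetriNet P T) : (P ⊕ T) → (P ⊕ T) → Prop
  | .inl p, .inr t => p ∈ N.pre t
  | .inr t, .inl p => p ∈ N.post t
  | _, _ => False

/-- `N` is a workflow net with source `i` and sink `o`. -/
def IsWorkflowNet (N : PetriNet P T) (i o : P) : Prop :=
  (∀ t, i ∉ N.post t) ∧ (∀ t, o ∉ N.pre t) ∧
  (∀ x : P ⊕ T, Relation.ReflTransGen (flowEdge N) (Sum.inl i) x ∧
    Relation.ReflTransGen (flowEdge N) x (Sum.inl o))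

/-- The short-circuited net: a fresh transition `t*` from `o` to `i`. -/
def shortCircuit (N : PetriNet P T) (i o : P) : PetriNet P (T ⊕ Unit) where
  pre t := match t with | .inl t => N.pre t | .inr _ => {o}
  post t := match t with | .inl t => N.post t | .inr _ => {i}

/-- The marking `[p]` with a single token on `p`. -/
noncomputable def unitMarking (p : P) : P → ℕ := fun q => if q = p then 1 else 0

/-- A workflow net is sound iff its short-circuited net marked with `[i]`
is live and bounded. -/
def Sound (N : PetriNet P T) (i o : P) : Prop :=
  Live (shortCircuit N i o) (unitMarking i) ∧ Bounded (shortCircuit N i o) (unitMarking i)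

/-- `AltPath N p0 [(t1,p1),...,(tn,pn)]` encodes the path `⟨p0,t1,p1,...,tn,pn⟩`
in `N`, alternating between places and transitions along the flow relation. -/
inductive AltPath (N : PetriNet P T) : P → List (T × P) → Prop
  | nil (p : P) : AltPath N p []
  | cons {p q : P} {t : T} {l : List (T × P)} :
      p ∈ N.pre t → q ∈ N.post t → AltPath N q l → AltPath N p ((t, q) :: l)

end PetriNet

open PetriNet

/-- Firing sequences project onto the Q-projection: the projected
sequence is executable in the marked Q-projection and leads to the restricted marking. -/
theorem fires_project {P T : Type} [Fintype P] [Fintype T]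
    (N : PetriNet P T) (Q : Set (Set (P ⊕ T))) (hne : Q.Nonempty)
    (hQ : ∀ X ∈ Q, PComponent N X)
    (M M' : P → ℕ) (σ : List T) (h : Fires N M σ M') :
    Fires (N.restrict (⋃₀ Q)) (fun p => M p.1)
      (σ.filterMap fun t => if h : Sum.inr t ∈ ⋃₀ Q then some ⟨t, h⟩ else none)
      (fun p => M' p.1) := by
  induction h with
  | nil M => exact Fires.nil _
  | @cons M M'' t σ ht h2 ih =>
    by_cases hm : Sum.inr t ∈ ⋃₀ Q
    · have hfire : (fun p : {p // Sum.inl p ∈ ⋃₀ Q} => N.fire M t p.1)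
          = (N.restrict (⋃₀ Q)).fire (fun p => M p.1) ⟨t, hm⟩ := by
        funext p
        simp [PetriNet.fire, PetriNet.restrict]
        rfl
      rw [hfire] at ih
      have hen : (N.restrict (⋃₀ Q)).enabled (fun p => M p.1) ⟨t, hm⟩ :=
        fun p hp => ht p.1 hp
      simpa only [List.filterMap_cons, dif_pos hm] using Fires.cons hen ih
    · have hfix : (fun p : {p // Sum.inl p ∈ ⋃₀ Q} => N.fire M t p.1)
          = (fun p => M p.1) := by
        funext p
        obtain ⟨X, hXQ, hpX⟩ := p.2
        have hcl := (hQ X hXQ).2.1 p.1 hpX t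
        have hpre : p.1 ∉ N.pre t := fun hc => hm ⟨X, hXQ, hcl (Or.inl hc)⟩
        have hpost : p.1 ∉ N.post t := fun hc => hm ⟨X, hXQ, hcl (Or.inr hc)⟩
        simp [PetriNet.fire, hpre, hpost]
      rw [hfix] at ih
      simpa only [List.filterMap_cons, dif_neg hm] using ih
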